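/- Let d ≥ 1, let f(x) = ∫_0^1 (4πs)^{-d/2} exp(-|x|²/(4s)) ds, and for T > 0 and a nonnegative Schwartz function φ on ℝ^d set φ̃_T(x) = T^{d/2} φ(T^{1/2} x). Then there exists a constant C > 0 (depending on φ but not on T) such that for all T ≥ 1 and all y ≠ 0, (f * φ̃_T)(y) ≤ f(y/2) ∫_{ℝ^d} φ(z) dz + C |y|^{-d}. -/

import Mathlib

open MeasureTheory

noncomputable def heatKernel (d : ℕ) (t : ℝ) (x : EuclideanSpace ℝ (Fin d)) : ℝ :=
  (4 * Real.pi * t) ^ (-(d : ℝ) / 2) * Real.exp (-‖x‖ ^ 2 / (4 * t))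

noncomputable def fOcc (d : ℕ) (x : EuclideanSpace ℝ (Fin d)) : ℝ :=
  ∫ s in (0 : ℝ)..1, heatKernel d s x

section aux

open Real Set

variable {d : ℕ}

lemma heatKernel_nonneg {s : ℝ} (hs : 0 ≤ s) (x : EuclideanSpace ℝ (Fin d)) :
    0 ≤ heatKernel d s x :=
  mul_nonneg (Real.rpow_nonneg (by positivity) _) (Real.exp_nonneg _)

lemma heatKernel_zero (hd : 1 ≤ d) (x : EuclideanSpace ℝ (Fin d)) :
    heatKernel d 0 x = 0 := by
  have h : (-(d : ℝ) / 2) ≠ 0 := by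
    have : (1:ℝ) ≤ (d:ℝ) := by exact_mod_cast hd
    intro h; rw [div_eq_zero_iff] at h; simp at h; linarith
  simp [heatKernel, Real.zero_rpow h]

lemma heatKernel_mono (hd : 1 ≤ d) {s : ℝ} (hs : 0 ≤ s)
    {x x' : EuclideanSpace ℝ (Fin d)} (h : ‖x‖ ≤ ‖x'‖) :
    heatKernel d s x' ≤ heatKernel d s x := by
  rcases eq_or_lt_of_le hs with rfl | hs
  · rw [heatKernel_zero hd, heatKernel_zero hd]
  · unfold heatKernel
    apply mul_le_mul_of_nonneg_left _ (Real.rpow_nonneg (by positivity) _)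
    apply Real.exp_le_exp.2
    rw [neg_div, neg_div, neg_le_neg_iff]
    gcongr

lemma heatKernel_measurable :
    Measurable (fun p : (EuclideanSpace ℝ (Fin d)) × ℝ => heatKernel d p.2 p.1) := by
  unfold heatKernel
  apply Measurable.mul
  · apply Measurable.pow
    · exact (measurable_const.mul measurable_snd)
    · exact measurable_const
  · apply Measurable.exp
    exact ((measurable_fst.norm.pow measurable_const).neg).div
      (measurable_const.mul measurable_snd)

lemma exp_neg_le (t : ℝ) (ht : 0 < t) (n : ℕ) :
    Real.exp (-t) ≤ n.factorial / t ^ n := by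
  have h1 : t ^ n / n.factorial ≤ Real.exp t := by
    calc t ^ n / n.factorial
        ≤ ∑ i ∈ Finset.range (n + 1), t ^ i / i.factorial := by
          exact Finset.single_le_sum (f := fun i => t ^ i / (i.factorial : ℝ)) (fun i _ => by positivity)
            (Finset.self_mem_range_succ n)
      _ ≤ Real.exp t := Real.sum_le_exp_of_nonneg ht.le _
  have h2 : (0:ℝ) < t ^ n / n.factorial := by positivity
  rw [Real.exp_neg]
  calc (Real.exp t)⁻¹ ≤ (t ^ n / n.factorial)⁻¹ := by
        exact inv_anti₀ h2 h1
    _ = n.factorial / t ^ n := by rw [inv_div]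


lemma heatKernel_le {x : EuclideanSpace ℝ (Fin d)} (hx : x ≠ 0) {s : ℝ}
    (hs : 0 < s) (hs1 : s ≤ 1) :
    heatKernel d s x ≤ (4 * π) ^ (-(d:ℝ)/2) * (d.factorial * (4 / ‖x‖ ^ 2) ^ d) := by
  have hxn : 0 < ‖x‖ := norm_pos_iff.2 hx
  have ht : 0 < ‖x‖ ^ 2 / (4 * s) := by positivity
  have h1 : Real.exp (-‖x‖ ^ 2 / (4 * s)) ≤ d.factorial * ((4 / ‖x‖ ^ 2) ^ d * s ^ d) := by
    rw [neg_div]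
    calc Real.exp (-(‖x‖ ^ 2 / (4 * s))) ≤ d.factorial / (‖x‖ ^ 2 / (4 * s)) ^ d :=
          exp_neg_le _ ht d
      _ = d.factorial * ((4 / ‖x‖ ^ 2) ^ d * s ^ d) := by
          have hh : (4 / ‖x‖ ^ 2) ^ d * s ^ d = (4 * s) ^ d / (‖x‖ ^ 2) ^ d := by
            rw [← mul_pow, ← div_pow]
            congr 1
            ring
          rw [hh, div_pow, div_div_eq_mul_div, mul_div_assoc]
  have h2 : (4 * π * s) ^ (-(d:ℝ)/2) = (4 * π) ^ (-(d:ℝ)/2) * s ^ (-(d:ℝ)/2) :=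
    Real.mul_rpow (by positivity) hs.le
  calc heatKernel d s x
      ≤ (4 * π * s) ^ (-(d:ℝ)/2) * (d.factorial * ((4 / ‖x‖ ^ 2) ^ d * s ^ d)) := by
        unfold heatKernel
        exact mul_le_mul_of_nonneg_left h1 (Real.rpow_nonneg (by positivity) _)
    _ = (4 * π) ^ (-(d:ℝ)/2) * (d.factorial * (4 / ‖x‖ ^ 2) ^ d) *
          (s ^ (-(d:ℝ)/2) * s ^ d) := by rw [h2]; ring
    _ ≤ (4 * π) ^ (-(d:ℝ)/2) * (d.factorial * (4 / ‖x‖ ^ 2) ^ d) * 1 := by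
        apply mul_le_mul_of_nonneg_left _ (by positivity)
        have : s ^ (-(d:ℝ)/2) * s ^ d = s ^ ((d:ℝ)/2) := by
          rw [← Real.rpow_natCast s d, ← Real.rpow_add hs]
          congr 1
          ring
        rw [this]
        exact Real.rpow_le_one hs.le hs1 (by positivity)
    _ = (4 * π) ^ (-(d:ℝ)/2) * (d.factorial * (4 / ‖x‖ ^ 2) ^ d) := mul_one _

lemma heatKernel_intervalIntegrable {x : EuclideanSpace ℝ (Fin d)} (hx : x ≠ 0) :
    IntervalIntegrable (fun s => heatKernel d s x) volume 0 1 := by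
  rw [intervalIntegrable_iff_integrableOn_Ioc_of_le zero_le_one]
  refine Measure.integrableOn_of_bounded (M := (4 * π) ^ (-(d:ℝ)/2) *
    (d.factorial * (4 / ‖x‖ ^ 2) ^ d)) (measure_Ioc_lt_top (a := (0:ℝ)) (b := 1)).ne
    (heatKernel_measurable.comp (measurable_const.prodMk measurable_id)).aestronglyMeasurable ?_
  filter_upwards [ae_restrict_mem measurableSet_Ioc] with s hs
  rw [Real.norm_eq_abs, abs_of_nonneg (heatKernel_nonneg hs.1.le x)]
  exact heatKernel_le hx hs.1 hs.2

lemma fOcc_nonneg (x : EuclideanSpace ℝ (Fin d)) : 0 ≤ fOcc d x :=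
  intervalIntegral.integral_nonneg zero_le_one fun s hs => heatKernel_nonneg hs.1 x

lemma fOcc_mono (hd : 1 ≤ d) {x x' : EuclideanSpace ℝ (Fin d)} (hx : x ≠ 0)
    (h : ‖x‖ ≤ ‖x'‖) : fOcc d x' ≤ fOcc d x := by
  have hx' : x' ≠ 0 := by
    intro e
    rw [e, norm_zero] at h
    exact hx (norm_le_zero_iff.1 h)
  exact intervalIntegral.integral_mono_on zero_le_one
    (heatKernel_intervalIntegrable hx') (heatKernel_intervalIntegrable hx)
    (fun s hs => heatKernel_mono hd hs.1 h)

lemma fOcc_stronglyMeasurable : StronglyMeasurable (fOcc d) := by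
  have h : fOcc d = fun x => ∫ s in Ioc (0:ℝ) 1, heatKernel d s x := by
    ext x
    exact intervalIntegral.integral_of_le zero_le_one
  rw [h]
  exact StronglyMeasurable.integral_prod_right
    (f := fun x s => heatKernel d s x) heatKernel_measurable.stronglyMeasurable

lemma integrable_gauss {b : ℝ} (hb : 0 < b) :
    Integrable (fun v : EuclideanSpace ℝ (Fin d) => Real.exp (-b * ‖v‖ ^ 2)) := by
  have h := (GaussianFourier.integrable_cexp_neg_mul_sq_norm_add
    (b := (b:ℂ)) (by simpa using hb) 0 (0 : EuclideanSpace ℝ (Fin d))).norm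
  apply h.congr
  filter_upwards with v
  simp only [zero_mul, add_zero, Complex.norm_exp]
  congr 1
  rw [show (-(b:ℂ) * (‖v‖:ℂ) ^ 2) = ((-b * ‖v‖ ^ 2 : ℝ) : ℂ) by push_cast; ring,
    Complex.ofReal_re]

lemma integrable_heatKernel {s : ℝ} (hs : 0 < s) :
    Integrable (fun x : EuclideanSpace ℝ (Fin d) => heatKernel d s x) := by
  unfold heatKernel
  have h : ∀ x : EuclideanSpace ℝ (Fin d),
      Real.exp (-‖x‖ ^ 2 / (4 * s)) = Real.exp (-(4 * s)⁻¹ * ‖x‖ ^ 2) := by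
    intro x; congr 1; ring
  simp_rw [h]
  exact (integrable_gauss (by positivity)).const_mul _

lemma integral_heatKernel {s : ℝ} (hs : 0 < s) :
    ∫ x : EuclideanSpace ℝ (Fin d), heatKernel d s x = 1 := by
  unfold heatKernel
  rw [MeasureTheory.integral_const_mul]
  have h : ∀ x : EuclideanSpace ℝ (Fin d),
      Real.exp (-‖x‖ ^ 2 / (4 * s)) = Real.exp (-(4 * s)⁻¹ * ‖x‖ ^ 2) := by
    intro x; congr 1; ring
  simp_rw [h]
  rw [GaussianFourier.integral_rexp_neg_mul_sq_norm (by positivity : (0:ℝ) < (4 * s)⁻¹)]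
  have h2 : (π / (4 * s)⁻¹) = 4 * π * s := by field_simp
  rw [h2, finrank_euclideanSpace_fin]
  rw [neg_div, Real.rpow_neg (by positivity)]
  exact inv_mul_cancel₀ (Real.rpow_pos_of_pos (by positivity) _).ne'

lemma fOcc_integrable (d : ℕ) : Integrable (fOcc d) := by
  constructor
  · exact fOcc_stronglyMeasurable.aestronglyMeasurable
  · rw [hasFiniteIntegral_iff_ofReal (Filter.Eventually.of_forall fOcc_nonneg)]
    have key : ∀ x : EuclideanSpace ℝ (Fin d), ENNReal.ofReal (fOcc d x) ≤
        ∫⁻ s in Ioc (0:ℝ) 1, ENNReal.ofReal (heatKernel d s x) := by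
      intro x
      have h : fOcc d x = ∫ s in Ioc (0:ℝ) 1, heatKernel d s x :=
        intervalIntegral.integral_of_le zero_le_one
      rw [h]
      by_cases hI : IntegrableOn (fun s => heatKernel d s x) (Ioc (0:ℝ) 1) volume
      · rw [ofReal_integral_eq_lintegral_ofReal hI ?_]
        filter_upwards [ae_restrict_mem measurableSet_Ioc] with s hs
        exact heatKernel_nonneg hs.1.le x
      · rw [integral_undef hI]; simp
    calc ∫⁻ x, ENNReal.ofReal (fOcc d x)
        ≤ ∫⁻ x, ∫⁻ s in Ioc (0:ℝ) 1, ENNReal.ofReal (heatKernel d s x) :=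
          lintegral_mono key
      _ = ∫⁻ s in Ioc (0:ℝ) 1, ∫⁻ x, ENNReal.ofReal (heatKernel d s x) := by
          apply lintegral_lintegral_swap
          exact (heatKernel_measurable.ennreal_ofReal).aemeasurable
      _ = ∫⁻ s in Ioc (0:ℝ) 1, 1 := by
          apply setLIntegral_congr_fun measurableSet_Ioc
          intro s hs
          dsimp only
          rw [← ofReal_integral_eq_lintegral_ofReal (integrable_heatKernel hs.1)
            (Filter.Eventually.of_forall (heatKernel_nonneg hs.1.le)),
            integral_heatKernel hs.1]
          simp
      _ = volume (Ioc (0:ℝ) 1) := by simp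
      _ < ⊤ := measure_Ioc_lt_top

end aux

theorem stmt19 (d : ℕ) (hd : 1 ≤ d)
    (φ : SchwartzMap (EuclideanSpace ℝ (Fin d)) ℝ) (hφ : ∀ x, 0 ≤ φ x) :
    ∃ C > 0, ∀ T : ℝ, 1 ≤ T → ∀ y : EuclideanSpace ℝ (Fin d), y ≠ 0 →
      (∫ z : EuclideanSpace ℝ (Fin d),
          fOcc d (y - z) * (T ^ ((d : ℝ) / 2) * φ ((T ^ ((1 : ℝ) / 2)) • z)))
        ≤ fOcc d ((2 : ℝ)⁻¹ • y) * (∫ z : EuclideanSpace ℝ (Fin d), φ z) +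
          C * ‖y‖ ^ (-(d : ℝ)) := by
  classical
  obtain ⟨C₀, hC₀pos, hC₀⟩ := φ.decay d 0
  simp only [norm_iteratedFDeriv_zero] at hC₀
  set I : ℝ := ∫ x, fOcc d x with hIdef
  have hI0 : 0 ≤ I := integral_nonneg fOcc_nonneg
  refine ⟨2 ^ d * C₀ * I + 1, by positivity, ?_⟩
  intro T hT y hy
  have hT0 : (0:ℝ) < T := lt_of_lt_of_le one_pos hT
  have hy0 : (0:ℝ) < ‖y‖ := norm_pos_iff.2 hy
  set R : ℝ := T ^ ((1:ℝ)/2) with hRdef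
  have hR0 : 0 < R := Real.rpow_pos_of_pos hT0 _
  set ψ : EuclideanSpace ℝ (Fin d) → ℝ :=
    fun z => T ^ ((d:ℝ)/2) * φ (R • z) with hψdef
  have hRd : R ^ d = T ^ ((d:ℝ)/2) := by
    rw [hRdef, ← Real.rpow_natCast (T ^ ((1:ℝ)/2)) d, ← Real.rpow_mul hT0.le]
    congr 1
    ring
  have hψ0 : ∀ z, 0 ≤ ψ z := fun z => mul_nonneg (by positivity) (hφ _)
  have hψcont : Continuous ψ :=
    continuous_const.mul (φ.continuous.comp (continuous_const_smul R))
  have hψint : Integrable ψ := by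
    apply Integrable.const_mul
    exact (integrable_comp_smul_iff volume (fun z => φ z) hR0.ne').2 (φ.integrable)
  have hψbd : ∃ B, ∀ z, ‖ψ z‖ ≤ B := by
    obtain ⟨C₁, hC₁pos, hC₁⟩ := φ.decay 0 0
    simp only [norm_iteratedFDeriv_zero, pow_zero, one_mul] at hC₁
    refine ⟨T ^ ((d:ℝ)/2) * C₁, fun z => ?_⟩
    rw [hψdef]
    calc ‖T ^ ((d:ℝ)/2) * φ (R • z)‖ = T ^ ((d:ℝ)/2) * ‖φ (R • z)‖ := by
          rw [norm_mul, Real.norm_eq_abs, abs_of_pos (Real.rpow_pos_of_pos hT0 _)]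
      _ ≤ T ^ ((d:ℝ)/2) * C₁ := by
          exact mul_le_mul_of_nonneg_left (hC₁ _) (by positivity)
  have hfy : Integrable (fun z => fOcc d (y - z)) := (fOcc_integrable d).comp_sub_left y
  have hint : Integrable (fun z => fOcc d (y - z) * ψ z) := by
    have := hfy.bdd_mul hψcont.aestronglyMeasurable (Filter.Eventually.of_forall hψbd.choose_spec)
    apply this.congr
    filter_upwards with z
    ring
  -- the set where |z| ≤ |y|/2
  set A : Set (EuclideanSpace ℝ (Fin d)) := {z | ‖z‖ ≤ ‖y‖ / 2} with hAdef
  have hAm : MeasurableSet A := measurableSet_le measurable_norm measurable_const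
  have hy2 : ‖(2:ℝ)⁻¹ • y‖ = ‖y‖ / 2 := by
    rw [norm_smul, Real.norm_eq_abs, abs_of_pos (by norm_num : (0:ℝ) < 2⁻¹)]
    ring
  have hy2ne : ((2:ℝ)⁻¹ • y) ≠ 0 := by
    intro h
    apply hy
    simpa using smul_eq_zero.1 h |>.resolve_left (by norm_num)
  -- scaling identity
  have hscale : ∫ z, ψ z = ∫ z, φ z := by
    rw [hψdef]
    simp only
    rw [MeasureTheory.integral_const_mul, Measure.integral_comp_smul volume (fun z => φ z) R,
      finrank_euclideanSpace_fin, hRd, smul_eq_mul, abs_of_pos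
        (inv_pos.2 (Real.rpow_pos_of_pos hT0 _)), ← mul_assoc,
      mul_inv_cancel₀ (Real.rpow_pos_of_pos hT0 _).ne', one_mul]
  -- split the integral
  rw [← integral_add_compl hAm hint]
  have part1 : ∫ z in A, fOcc d (y - z) * ψ z ≤ fOcc d ((2:ℝ)⁻¹ • y) * ∫ z, φ z := by
    calc ∫ z in A, fOcc d (y - z) * ψ z
        ≤ ∫ z in A, fOcc d ((2:ℝ)⁻¹ • y) * ψ z := by
          apply setIntegral_mono_on hint.integrableOn
            (hψint.const_mul _).integrableOn hAm
          intro z hz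
          apply mul_le_mul_of_nonneg_right _ (hψ0 z)
          apply fOcc_mono hd hy2ne
          rw [hy2]
          calc ‖y‖ / 2 = ‖y‖ - ‖y‖ / 2 := by ring
            _ ≤ ‖y‖ - ‖z‖ := by
                have : ‖z‖ ≤ ‖y‖ / 2 := hz
                linarith
            _ ≤ ‖y - z‖ := by
                have := norm_sub_norm_le y z
                linarith [norm_sub_norm_le (y : EuclideanSpace ℝ (Fin d)) z]
      _ = fOcc d ((2:ℝ)⁻¹ • y) * ∫ z in A, ψ z := by rw [integral_const_mul]
      _ ≤ fOcc d ((2:ℝ)⁻¹ • y) * ∫ z, ψ z := by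
          apply mul_le_mul_of_nonneg_left _ (fOcc_nonneg _)
          exact setIntegral_le_integral hψint (Filter.Eventually.of_forall hψ0)
      _ = fOcc d ((2:ℝ)⁻¹ • y) * ∫ z, φ z := by rw [hscale]
  have hyd : ‖y‖ ^ (-(d:ℝ)) = (‖y‖ ^ d)⁻¹ := by
    rw [Real.rpow_neg hy0.le, Real.rpow_natCast]
  have part2 : ∫ z in Aᶜ, fOcc d (y - z) * ψ z ≤
      (2 ^ d * C₀ * I) * ‖y‖ ^ (-(d:ℝ)) := by
    have hbd : ∀ z ∈ Aᶜ, fOcc d (y - z) * ψ z ≤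
        fOcc d (y - z) * (2 ^ d * C₀ * ‖y‖ ^ (-(d:ℝ))) := by
      intro z hz
      have hz2 : ‖y‖ / 2 < ‖z‖ := by
        simp only [hAdef, Set.mem_compl_iff, Set.mem_setOf_eq, not_le] at hz
        exact hz
      have hz0 : 0 < ‖z‖ := lt_of_le_of_lt (by positivity) hz2
      apply mul_le_mul_of_nonneg_left _ (fOcc_nonneg _)
      have hw : ‖R • z‖ = R * ‖z‖ := by
        rw [norm_smul, Real.norm_eq_abs, abs_of_pos hR0]
      have h1 : φ (R • z) ≤ C₀ / (R * ‖z‖) ^ d := by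
        have := hC₀ (R • z)
        rw [hw] at this
        calc φ (R • z) ≤ ‖φ (R • z)‖ := le_abs_self _
          _ ≤ C₀ / (R * ‖z‖) ^ d := by
              rw [le_div_iff₀ (by positivity)]
              linarith [this]
      calc ψ z = T ^ ((d:ℝ)/2) * φ (R • z) := rfl
        _ ≤ T ^ ((d:ℝ)/2) * (C₀ / (R * ‖z‖) ^ d) := by
            exact mul_le_mul_of_nonneg_left h1 (by positivity)
        _ = C₀ / ‖z‖ ^ d := by
            rw [mul_pow, hRd]
            field_simp
        _ ≤ C₀ / (‖y‖ / 2) ^ d := by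
            apply div_le_div_of_nonneg_left hC₀pos.le (by positivity)
            exact pow_le_pow_left₀ (by positivity) hz2.le d
        _ = 2 ^ d * C₀ * ‖y‖ ^ (-(d:ℝ)) := by
            rw [hyd, div_pow]
            field_simp
    calc ∫ z in Aᶜ, fOcc d (y - z) * ψ z
        ≤ ∫ z in Aᶜ, fOcc d (y - z) * (2 ^ d * C₀ * ‖y‖ ^ (-(d:ℝ))) := by
          apply setIntegral_mono_on hint.integrableOn
            (hfy.mul_const _).integrableOn hAm.compl hbd
      _ = (∫ z in Aᶜ, fOcc d (y - z)) * (2 ^ d * C₀ * ‖y‖ ^ (-(d:ℝ))) := by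
          rw [integral_mul_const]
      _ ≤ (∫ z, fOcc d (y - z)) * (2 ^ d * C₀ * ‖y‖ ^ (-(d:ℝ))) := by
          apply mul_le_mul_of_nonneg_right _ (by positivity)
          exact setIntegral_le_integral hfy
            (Filter.Eventually.of_forall fun z => fOcc_nonneg _)
      _ = (2 ^ d * C₀ * I) * ‖y‖ ^ (-(d:ℝ)) := by
          rw [integral_sub_left_eq_self (fOcc d) volume y]
          ring
  have hfinal : (2 ^ d * C₀ * I) * ‖y‖ ^ (-(d:ℝ)) ≤
      (2 ^ d * C₀ * I + 1) * ‖y‖ ^ (-(d:ℝ)) := by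
    apply mul_le_mul_of_nonneg_right _ (Real.rpow_nonneg hy0.le _)
    linarith
  linarith [part1, part2, hfinal]
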